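/- For every t ≥ 1, the probability of c at time t with respect to the dynamic knowledge base K = ((μ, T), 𝕊) satisfies P_K(c[t]) = Σ over worlds W with O_W ⊨ c of μ_t(W). -/

import Mathlib

open scoped ENNReal

namespace BL

variable {I A C V : Type*}

/-- A world `W` satisfies the context `κ` if it agrees with `κ` wherever it is defined. -/
def SatCtx (W : V → Bool) (κ : V → Option Bool) : Prop :=
  ∀ v b, κ v = some b → W v = b

/-- The ontology induced by the world `W` from the `V`-ontology `𝕊`. -/
def OW (𝕊 : Finset (A × (V → Option Bool))) (W : V → Bool) : Set A :=
  {α | ∃ κ, (α, κ) ∈ 𝕊 ∧ SatCtx W κ}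

/-- `i` is a model of the ontology `O`. -/
def IsOntModel (satA : I → A → Prop) (O : Set A) (i : I) : Prop :=
  ∀ α ∈ O, satA i α

/-- The ontology `O` entails the consequence `c`. -/
def Entails (satA : I → A → Prop) (satC : I → C → Prop) (O : Set A) (c : C) : Prop :=
  ∀ i : I, IsOntModel satA O i → satC i c

/-- A probabilistic interpretation `p` (a finitely supported PMF on pairs of an
interpretation and a world) is a model of the knowledge base `(PB, 𝕊)`. -/
def IsKBModel (satA : I → A → Prop) (PB : PMF (V → Bool))
    (𝕊 : Finset (A × (V → Option Bool))) (p : PMF (I × (V → Bool))) : Prop :=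
  p.support.Finite ∧
    (∀ iW ∈ p.support, IsOntModel satA (OW 𝕊 iW.2) iW.1) ∧
    ∀ W : V → Bool, ∑' i : I, p (i, W) = PB W

/-- `P_p(c)`: the probability of the consequence `c` w.r.t. `p`. -/
noncomputable def Pp (satC : I → C → Prop) (p : PMF (I × (V → Bool))) (c : C) : ℝ≥0∞ :=
  ∑' iW : I × (V → Bool), {x : I × (V → Bool) | satC x.1 c}.indicator (⇑p) iW

/-- `P_K(c)`: the infimum of `P_p(c)` over all models `p` of the knowledge base. -/
noncomputable def PK (satA : I → A → Prop) (satC : I → C → Prop) (PB : PMF (V → Bool))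
    (𝕊 : Finset (A × (V → Option Bool))) (c : C) : ℝ≥0∞ :=
  sInf {x : ℝ≥0∞ | ∃ p : PMF (I × (V → Bool)), IsKBModel satA PB 𝕊 p ∧ x = Pp satC p c}

/-- The `t`-th marginal of the DBN `(μ, T)` (0-indexed: `marg μ T 0 = μ_1 = μ`,
and `marg μ T n = μ_{n+1}` with `μ_{t+1}(W') = Σ_W μ_t(W)·T(W)(W')`). -/
noncomputable def marg (μ : PMF (V → Bool)) (T : (V → Bool) → PMF (V → Bool)) :
    ℕ → PMF (V → Bool)
  | 0 => μ
  | n + 1 => (marg μ T n).bind T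

/-- A timed probabilistic interpretation `(p_t)_{t ≥ 1}` is a model of the dynamic
knowledge base `((μ, T), 𝕊)` if for every `t ≥ 1`, `p t` is a model of `(μ_t, 𝕊)`. -/
def IsTimedModel (satA : I → A → Prop) (μ : PMF (V → Bool))
    (T : (V → Bool) → PMF (V → Bool)) (𝕊 : Finset (A × (V → Option Bool)))
    (p : ℕ → PMF (I × (V → Bool))) : Prop :=
  ∀ t : ℕ, 1 ≤ t → IsKBModel satA (marg μ T (t - 1)) 𝕊 (p t)

/-- `P_K(c[t])`: the infimum of `P_{p_t}(c)` over all timed models of the dynamic KB. -/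
noncomputable def PKtime (satA : I → A → Prop) (satC : I → C → Prop)
    (μ : PMF (V → Bool)) (T : (V → Bool) → PMF (V → Bool))
    (𝕊 : Finset (A × (V → Option Bool))) (c : C) (t : ℕ) : ℝ≥0∞ :=
  sInf {x : ℝ≥0∞ | ∃ p : ℕ → PMF (I × (V → Bool)),
    IsTimedModel satA μ T 𝕊 p ∧ x = Pp satC (p t) c}

/-- for every `t ≥ 1`, `P_K(c[t]) = Σ_{O_W ⊨ c} μ_t(W)`. -/
theorem timed_probabilistic_entailment [Fintype V]
    (satA : I → A → Prop) (satC : I → C → Prop)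
    (μ : PMF (V → Bool)) (T : (V → Bool) → PMF (V → Bool))
    (𝕊 : Finset (A × (V → Option Bool))) (c : C) (t : ℕ) (ht : 1 ≤ t)
    (hmod : ∀ W : V → Bool, ∃ i : I, IsOntModel satA (OW 𝕊 W) i) :
    PKtime satA satC μ T 𝕊 c t
      = ∑' W : V → Bool,
          {W : V → Bool | Entails satA satC (OW 𝕊 W) c}.indicator (⇑(marg μ T (t - 1))) W := by
  classical
  -- choose for each world a model of O_W witnessing (non-)entailment
  have hpick : ∀ W : V → Bool, ∃ i : I, IsOntModel satA (OW 𝕊 W) i ∧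
      (satC i c ↔ Entails satA satC (OW 𝕊 W) c) := by
    intro W
    by_cases h : Entails satA satC (OW 𝕊 W) c
    · obtain ⟨i, hi⟩ := hmod W
      exact ⟨i, hi, by simp [h, h i hi]⟩
    · have h' : ∃ i : I, IsOntModel satA (OW 𝕊 W) i ∧ ¬ satC i c := by
        by_contra hcon
        push_neg at hcon
        exact h fun i hi => hcon i hi
      obtain ⟨i, hi, hnc⟩ := h'
      exact ⟨i, hi, by simp [h, hnc]⟩
  choose cW hcW1 hcW2 using hpick
  set f : (V → Bool) → I × (V → Bool) := fun W => (cW W, W) with hf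
  have hq : ∀ (m : PMF (V → Bool)) (i : I) (W : V → Bool),
      (m.map f) (i, W) = if i = cW W then m W else 0 := by
    intro m i W
    rw [PMF.map_apply, tsum_eq_single W]
    · by_cases h : i = cW W <;> simp [hf, Prod.ext_iff, h]
    · intro W' hW'
      simp only [hf, Prod.ext_iff]
      exact if_neg (fun h => hW' h.2.symm)
  have hsum : ∀ (m : PMF (V → Bool)) (W : V → Bool),
      ∑' i : I, (m.map f) (i, W) = m W := by
    intro m W
    rw [tsum_eq_single (cW W)]
    · simp [hq]
    · intro i hi; simp [hq, hi]
  have hKB : ∀ m : PMF (V → Bool), IsKBModel satA m 𝕊 (m.map f) := by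
    intro m
    refine ⟨?_, ?_, hsum m⟩
    · rw [PMF.support_map]
      exact (Set.toFinite m.support).image f
    · intro iW hiW
      rw [PMF.support_map] at hiW
      obtain ⟨W, _, rfl⟩ := hiW
      exact hcW1 W
  have hPp : ∀ m : PMF (V → Bool), Pp satC (m.map f) c
      = ∑' W : V → Bool,
          {W : V → Bool | Entails satA satC (OW 𝕊 W) c}.indicator (⇑m) W := by
    intro m
    unfold Pp
    rw [ENNReal.tsum_prod', ENNReal.tsum_comm]
    refine tsum_congr fun W => ?_
    rw [tsum_eq_single (cW W)]
    · by_cases hE : Entails satA satC (OW 𝕊 W) c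
      · have hs : satC (cW W) c := (hcW2 W).2 hE
        simp [Set.indicator_apply, hs, hE, hq]
      · have hs : ¬ satC (cW W) c := fun h => hE ((hcW2 W).1 h)
        simp [Set.indicator_apply, hs, hE]
    · intro i hi
      simp [Set.indicator_apply, hq, hi]
  have hLB : ∀ p : PMF (I × (V → Bool)), IsKBModel satA (marg μ T (t - 1)) 𝕊 p →
      (∑' W : V → Bool,
          {W : V → Bool | Entails satA satC (OW 𝕊 W) c}.indicator
            (⇑(marg μ T (t - 1))) W) ≤ Pp satC p c := by
    rintro p ⟨hfin, hsupp, hmarg⟩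
    unfold Pp
    rw [ENNReal.tsum_prod', ENNReal.tsum_comm]
    refine ENNReal.tsum_le_tsum fun W => ?_
    by_cases hE : Entails satA satC (OW 𝕊 W) c
    · rw [Set.indicator_apply, if_pos (show W ∈ {W | Entails satA satC (OW 𝕊 W) c} from hE),
        ← hmarg W]
      refine ENNReal.tsum_le_tsum fun i => ?_
      by_cases hp : p (i, W) = 0
      · rw [hp]; exact zero_le
      · have hmem : (i, W) ∈ p.support := by simpa [PMF.mem_support_iff] using hp
        have hs : satC i c := hE i (hsupp _ hmem)
        rw [Set.indicator_of_mem (by exact hs)]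
    · rw [Set.indicator_apply, if_neg (show W ∉ {W | Entails satA satC (OW 𝕊 W) c} from hE)]
      exact zero_le
  unfold PKtime
  apply le_antisymm
  · refine sInf_le ⟨fun s => (marg μ T (s - 1)).map f, fun s hs => hKB _, ?_⟩
    exact (hPp _).symm
  · refine le_sInf ?_
    rintro x ⟨p, hp, rfl⟩
    exact hLB (p t) (hp t ht)

end BL
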